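/- For any sequence of integers (a_n), the set t^{f,g}_{(a_n)}(𝕋) = {x ∈ 𝕋 : a_n x → 0 f^g-statistically} is a subgroup of the circle group 𝕋 = ℝ/ℤ, and it is an F_{σδ} (hence Borel) subset of 𝕋 containing the classical characterized subgroup t_{(a_n)}(𝕋) = {x : a_n x → 0 in 𝕋}. -/
import Mathlib


open Filter Set

/-- A modulus function: nonnegative, vanishing exactly at 0, subadditive,
non-decreasing, right continuous at 0 (all on `[0,∞)`). -/
def IsModulus (f : ℝ → ℝ) : Prop :=
  (∀ x : ℝ, 0 ≤ x → 0 ≤ f x) ∧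
  (∀ x : ℝ, 0 ≤ x → (f x = 0 ↔ x = 0)) ∧
  (∀ x y : ℝ, 0 ≤ x → 0 ≤ y → f (x + y) ≤ f x + f y) ∧
  (∀ x y : ℝ, 0 ≤ x → x ≤ y → f x ≤ f y) ∧
  ContinuousWithinAt f (Set.Ici 0) 0

/-- An unbounded modulus function. -/
def IsUnboundedModulus (f : ℝ → ℝ) : Prop :=
  IsModulus f ∧ Tendsto f atTop atTop

/-- A weight function `g : ℕ → [0,∞)` with `g n → ∞` and `n / g n ↛ 0`. -/
def IsWeight (g : ℕ → ℝ) : Prop :=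
  (∀ n, 0 ≤ g n) ∧ Tendsto g atTop atTop ∧
  ¬ Tendsto (fun n : ℕ => (n : ℝ) / g n) atTop (nhds 0)

open scoped Classical in
/-- `|A ∩ [1,n]|`. -/
noncomputable def cnt (A : Set ℕ) (n : ℕ) : ℕ :=
  ((Finset.Icc 1 n).filter (fun m => m ∈ A)).card

/-- The ideal `𝒵_g(f)` of sets whose `f`-density of weight `g` is zero
(for nonnegative sequences, `limsup = 0` is equivalent to convergence to `0`). -/
noncomputable def Zd (f : ℝ → ℝ) (g : ℕ → ℝ) : Set (Set ℕ) :=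
  {A | Tendsto (fun n => f (cnt A n) / f (g n)) atTop (nhds 0)}

/-- The `f^g`-statistically characterized subgroup `t^{f,g}_{(a_n)}(𝕋)`. -/
noncomputable def statChar (f : ℝ → ℝ) (g : ℕ → ℝ) (a : ℕ → ℤ) :
    Set (AddCircle (1 : ℝ)) :=
  {x | ∀ ε > 0, {n : ℕ | ε ≤ ‖(a n) • x‖} ∈ Zd f g}

/-- An arithmetic sequence: `a 0 = 1`, strictly increasing, `a n ∣ a (n+1)`,
and all ratios `q_n ≥ 2`. -/
def IsArith (a : ℕ → ℕ) : Prop :=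
  a 0 = 1 ∧ StrictMono a ∧ (∀ n, a n ∣ a (n + 1)) ∧ (∀ n, 2 * a n ≤ a (n + 1))

/-- Canonical representation `x = Σ_{n≥1} c_n / a_n` with `0 ≤ c_n ≤ q_n - 1`
and `c_n < q_n - 1` infinitely often; here `q_n = a n / a (n-1)`. -/
def IsCanonRep (a : ℕ → ℕ) (c : ℕ → ℕ) (x : AddCircle (1 : ℝ)) : Prop :=
  c 0 = 0 ∧ (∀ n, 1 ≤ n → c n ≤ a n / a (n - 1) - 1) ∧
  (∀ N, ∃ n, N ≤ n ∧ c n < a n / a (n - 1) - 1) ∧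
  x = ((∑' n, (c n : ℝ) / (a n : ℝ) : ℝ) : AddCircle (1 : ℝ))

-- auxiliary lemmas
open scoped Classical

section Aux
variable {f : ℝ → ℝ} {g : ℕ → ℝ}

lemma my_div_le_div {a b c : ℝ} (h : a ≤ b) (hc : 0 ≤ c) : a / c ≤ b / c := by
  rcases hc.lt_or_eq with h1 | h1
  · exact (div_le_div_iff_of_pos_right h1).2 h
  · simp [← h1]

lemma cnt_mono {A B : Set ℕ} (h : A ⊆ B) (n : ℕ) : cnt A n ≤ cnt B n := by
  apply Finset.card_le_card
  intro m hm
  simp only [cnt, Finset.mem_filter] at hm ⊢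
  exact ⟨hm.1, h hm.2⟩

lemma fg_top (hf : IsUnboundedModulus f) (hg : IsWeight g) :
    Tendsto (fun n => f (g n)) atTop atTop := hf.2.comp hg.2.1

lemma zd_subset (hf : IsUnboundedModulus f) (hg : IsWeight g) {A B : Set ℕ}
    (h : A ⊆ B) (hB : B ∈ Zd f g) : A ∈ Zd f g := by
  refine squeeze_zero'
    (Eventually.of_forall fun n => div_nonneg (hf.1.1 _ (Nat.cast_nonneg _)) (hf.1.1 _ (hg.1 n)))
    (Eventually.of_forall fun n => ?_) hB
  exact my_div_le_div
    (hf.1.2.2.2.1 _ _ (Nat.cast_nonneg _) (Nat.cast_le.2 (cnt_mono h n))) (hf.1.1 _ (hg.1 n))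

lemma zd_union (hf : IsUnboundedModulus f) (hg : IsWeight g) {A B : Set ℕ}
    (hA : A ∈ Zd f g) (hB : B ∈ Zd f g) : A ∪ B ∈ Zd f g := by
  have hsum : Tendsto (fun n => f (cnt A n) / f (g n) + f (cnt B n) / f (g n)) atTop (nhds 0) := by
    have := hA.add hB
    simpa using this
  refine squeeze_zero'
    (Eventually.of_forall fun n => div_nonneg (hf.1.1 _ (Nat.cast_nonneg _)) (hf.1.1 _ (hg.1 n)))
    (Eventually.of_forall fun n => ?_) hsum
  have h1 : cnt (A ∪ B) n ≤ cnt A n + cnt B n := by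
    simp only [cnt, Set.mem_union]
    rw [Finset.filter_or]
    exact Finset.card_union_le _ _
  have h2 : f (cnt (A ∪ B) n) ≤ f (cnt A n) + f (cnt B n) := by
    calc f ((cnt (A ∪ B) n : ℝ)) ≤ f ((cnt A n : ℝ) + (cnt B n : ℝ)) := by
          apply hf.1.2.2.2.1 _ _ (Nat.cast_nonneg _)
          push_cast
          exact_mod_cast h1
      _ ≤ f (cnt A n) + f (cnt B n) := hf.1.2.2.1 _ _ (Nat.cast_nonneg _) (Nat.cast_nonneg _)
  calc f (cnt (A ∪ B) n) / f (g n) ≤ (f (cnt A n) + f (cnt B n)) / f (g n) :=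
        my_div_le_div h2 (hf.1.1 _ (hg.1 n))
    _ = f (cnt A n) / f (g n) + f (cnt B n) / f (g n) := add_div _ _ _

lemma zd_finite (hf : IsUnboundedModulus f) (hg : IsWeight g) {A : Set ℕ}
    (hA : A.Finite) : A ∈ Zd f g := by
  have hbound : ∀ n, cnt A n ≤ hA.toFinset.card := by
    intro n
    apply Finset.card_le_card
    intro m hm
    simp only [cnt, Finset.mem_filter] at hm
    exact hA.mem_toFinset.2 hm.2
  have htend : Tendsto (fun n => f (hA.toFinset.card) / f (g n)) atTop (nhds 0) :=
    Tendsto.div_atTop tendsto_const_nhds (fg_top hf hg)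
  refine squeeze_zero'
    (Eventually.of_forall fun n => div_nonneg (hf.1.1 _ (Nat.cast_nonneg _)) (hf.1.1 _ (hg.1 n)))
    (Eventually.of_forall fun n => ?_) htend
  exact my_div_le_div
    (hf.1.2.2.2.1 _ _ (Nat.cast_nonneg _) (Nat.cast_le.2 (hbound n))) (hf.1.1 _ (hg.1 n))

lemma zd_iff (hf : IsUnboundedModulus f) (hg : IsWeight g) (A : Set ℕ) :
    A ∈ Zd f g ↔ ∀ j : ℕ, ∃ N, ∀ n ≥ N, ((j : ℝ) + 1) * f (cnt A n) ≤ f (g n) := by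
  constructor
  · intro h j
    have hpos : (0:ℝ) < 1 / ((j:ℝ)+1) := by positivity
    have h1 : ∀ᶠ n in atTop, f (cnt A n) / f (g n) < 1 / ((j:ℝ)+1) := h (Iio_mem_nhds hpos)
    have h2 : ∀ᶠ n in atTop, (1:ℝ) ≤ f (g n) := (fg_top hf hg).eventually_ge_atTop 1
    obtain ⟨N, hN⟩ := eventually_atTop.1 (h1.and h2)
    refine ⟨N, fun n hn => ?_⟩
    obtain ⟨ha1, ha2⟩ := hN n hn
    have hgn : (0:ℝ) < f (g n) := lt_of_lt_of_le one_pos ha2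
    rw [div_lt_div_iff₀ hgn (by positivity)] at ha1
    linarith
  · intro h
    show Tendsto _ atTop (nhds 0)
    rw [Metric.tendsto_atTop]
    intro ε hε
    obtain ⟨j, hj⟩ := exists_nat_one_div_lt hε
    obtain ⟨N1, hN1⟩ := h j
    obtain ⟨N2, hN2⟩ := eventually_atTop.1 ((fg_top hf hg).eventually_ge_atTop 1)
    refine ⟨max N1 N2, fun n hn => ?_⟩
    have hgn : (0:ℝ) < f (g n) := lt_of_lt_of_le one_pos (hN2 n (le_trans (le_max_right _ _) hn))
    have hb := hN1 n (le_trans (le_max_left _ _) hn)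
    rw [Real.dist_eq, sub_zero, abs_of_nonneg (div_nonneg (hf.1.1 _ (Nat.cast_nonneg _)) hgn.le)]
    calc f (cnt A n) / f (g n) ≤ 1 / ((j:ℝ)+1) := by
          rw [div_le_div_iff₀ hgn (by positivity)]; linarith
      _ < ε := hj

/-- The set of indices where `‖a n • x‖` strictly exceeds `1/(k+1)`. -/
def Aset (a : ℕ → ℤ) (k : ℕ) (x : AddCircle (1 : ℝ)) : Set ℕ :=
  {n | 1 / ((k:ℝ)+1) < ‖(a n) • x‖}

lemma statChar_iff (hf : IsUnboundedModulus f) (hg : IsWeight g) (a : ℕ → ℤ)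
    (x : AddCircle (1 : ℝ)) :
    x ∈ statChar f g a ↔ ∀ k : ℕ, Aset a k x ∈ Zd f g := by
  constructor
  · intro h k
    have hmem := h (1/((k:ℝ)+1)) (by positivity)
    have hsub : Aset a k x ⊆ {n : ℕ | 1/((k:ℝ)+1) ≤ ‖(a n) • x‖} := by
      intro n hn
      simp only [Aset, mem_setOf_eq] at hn ⊢
      exact le_of_lt hn
    exact zd_subset hf hg hsub hmem
  · intro h ε hε
    obtain ⟨k, hk⟩ := exists_nat_one_div_lt hε
    have hsub : {n : ℕ | ε ≤ ‖(a n) • x‖} ⊆ Aset a k x := by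
      intro n hn
      simp only [Aset, mem_setOf_eq] at hn ⊢
      exact lt_of_lt_of_le hk hn
    exact zd_subset hf hg hsub (h k)

lemma isOpen_lt_cnt (a : ℕ → ℤ) (k n v : ℕ) :
    IsOpen {x : AddCircle (1:ℝ) | v < cnt (Aset a k x) n} := by
  have heq : {x : AddCircle (1:ℝ) | v < cnt (Aset a k x) n} =
      ⋃ T ∈ Finset.powersetCard (v+1) (Finset.Icc 1 n),
        ⋂ m ∈ T, {x : AddCircle (1:ℝ) | 1 / ((k:ℝ)+1) < ‖(a m) • x‖} := by
    ext x
    simp only [mem_setOf_eq, mem_iUnion, mem_iInter, Finset.mem_powersetCard]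
    constructor
    · intro h
      obtain ⟨T, hT, hTc⟩ := Finset.exists_subset_card_eq (show v+1 ≤
        ((Finset.Icc 1 n).filter (fun m => m ∈ Aset a k x)).card from h)
      refine ⟨T, ⟨hT.trans (Finset.filter_subset _ _), hTc⟩, fun m hm => ?_⟩
      have := hT hm
      simp only [Finset.mem_filter] at this
      exact this.2
    · rintro ⟨T, ⟨hTs, hTc⟩, hTp⟩
      have hsub : T ⊆ (Finset.Icc 1 n).filter (fun m => m ∈ Aset a k x) :=
        fun m hm => Finset.mem_filter.2 ⟨hTs hm, hTp m hm⟩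
      calc v < v + 1 := Nat.lt_succ_self v
        _ = T.card := hTc.symm
        _ ≤ _ := Finset.card_le_card hsub
  rw [heq]
  exact isOpen_biUnion fun T _ => isOpen_biInter_finset fun m _ =>
    isOpen_lt continuous_const ((continuous_zsmul (a m)).norm)

lemma isClosed_cnt_lt (a : ℕ → ℤ) (k n v : ℕ) :
    IsClosed {x : AddCircle (1:ℝ) | cnt (Aset a k x) n < v} := by
  cases v with
  | zero => simp
  | succ w =>
    have : {x : AddCircle (1:ℝ) | cnt (Aset a k x) n < w + 1} =
        {x : AddCircle (1:ℝ) | w < cnt (Aset a k x) n}ᶜ := by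
      ext x; simp [Nat.lt_succ_iff, not_lt]
    rw [this]
    exact (isOpen_lt_cnt a k n w).isClosed_compl

/-- The closed building blocks. -/
def Gset (f : ℝ → ℝ) (g : ℕ → ℝ) (a : ℕ → ℤ) (k j N : ℕ) : Set (AddCircle (1:ℝ)) :=
  {x | ∀ n, N ≤ n → ((j:ℝ)+1) * f (cnt (Aset a k x) n) ≤ f (g n)}

lemma isClosed_Gset (hf : IsUnboundedModulus f) (k j N : ℕ) (a : ℕ → ℤ) :
    IsClosed (Gset f g a k j N) := by
  have heq : Gset f g a k j N = ⋂ (n : ℕ), ⋂ (_ : N ≤ n), ⋂ (v : ℕ),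
      ⋂ (_ : ¬ (((j:ℝ)+1) * f v ≤ f (g n))),
        {x : AddCircle (1:ℝ) | cnt (Aset a k x) n < v} := by
    ext x
    simp only [Gset, mem_setOf_eq, mem_iInter]
    constructor
    · intro h n hn v hv
      by_contra hc
      push_neg at hc
      apply hv
      calc ((j:ℝ)+1) * f v ≤ ((j:ℝ)+1) * f (cnt (Aset a k x) n) := by
            have := hf.1.2.2.2.1 (v : ℝ) (cnt (Aset a k x) n) (Nat.cast_nonneg _)
              (Nat.cast_le.2 hc)
            nlinarith [this]
        _ ≤ f (g n) := h n hn
    · intro h n hn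
      by_contra hc
      exact lt_irrefl _ (h n hn (cnt (Aset a k x) n) hc)
  rw [heq]
  exact isClosed_iInter fun n => isClosed_iInter fun _ => isClosed_iInter fun v =>
    isClosed_iInter fun _ => isClosed_cnt_lt a k n v

lemma statChar_eq_iInter (hf : IsUnboundedModulus f) (hg : IsWeight g) (a : ℕ → ℤ) :
    statChar f g a = ⋂ i : ℕ, ⋃ N : ℕ, Gset f g a (Nat.unpair i).1 (Nat.unpair i).2 N := by
  ext x
  simp only [mem_iInter, mem_iUnion]
  rw [statChar_iff hf hg]
  constructor
  · intro h i
    obtain ⟨N, hN⟩ := (zd_iff hf hg _).1 (h (Nat.unpair i).1) (Nat.unpair i).2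
    exact ⟨N, fun n hn => hN n hn⟩
  · intro h k
    rw [zd_iff hf hg]
    intro j
    obtain ⟨N, hN⟩ := h (Nat.pair k j)
    rw [Nat.unpair_pair] at hN
    exact ⟨N, fun n hn => hN n hn⟩

end Aux


theorem stmt10 (f : ℝ → ℝ) (hf : IsUnboundedModulus f) (g : ℕ → ℝ) (hg : IsWeight g)
    (a : ℕ → ℤ) :
    (∃ H : AddSubgroup (AddCircle (1 : ℝ)),
        (H : Set (AddCircle (1 : ℝ))) = statChar f g a) ∧
    (∃ F : ℕ → ℕ → Set (AddCircle (1 : ℝ)), (∀ i j, IsClosed (F i j)) ∧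
        statChar f g a = ⋂ i, ⋃ j, F i j) ∧
    MeasurableSet (statChar f g a) ∧
    {x : AddCircle (1 : ℝ) | Tendsto (fun n => ‖(a n) • x‖) atTop (nhds 0)} ⊆
      statChar f g a := by
  refine ⟨?_, ?_, ?_, ?_⟩
  · refine ⟨{ carrier := statChar f g a, zero_mem' := ?_, add_mem' := ?_, neg_mem' := ?_ }, rfl⟩
    · intro x y hx hy ε hε
      have hsub : {n : ℕ | ε ≤ ‖(a n) • (x + y)‖} ⊆
          {n : ℕ | ε/2 ≤ ‖(a n) • x‖} ∪ {n : ℕ | ε/2 ≤ ‖(a n) • y‖} := by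
        intro n hn
        simp only [mem_setOf_eq, Set.mem_union] at hn ⊢
        by_contra hc
        push_neg at hc
        have h1 : ‖(a n) • (x+y)‖ ≤ ‖(a n) • x‖ + ‖(a n) • y‖ := by
          rw [smul_add]; exact norm_add_le _ _
        linarith [hc.1, hc.2]
      exact zd_subset hf hg hsub
        (zd_union hf hg (hx (ε/2) (by linarith)) (hy (ε/2) (by linarith)))
    · intro ε hε
      have hemp : {n : ℕ | ε ≤ ‖(a n) • (0 : AddCircle (1:ℝ))‖} = ∅ := by
        ext n
        simp only [smul_zero, norm_zero, mem_setOf_eq, mem_empty_iff_false, iff_false, not_le]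
        exact hε
      rw [hemp]
      exact zd_finite hf hg finite_empty
    · intro x hx ε hε
      have hset : {n : ℕ | ε ≤ ‖(a n) • (-x)‖} = {n : ℕ | ε ≤ ‖(a n) • x‖} := by
        ext n; simp [smul_neg]
      rw [hset]
      exact hx ε hε
  · exact ⟨fun i N => Gset f g a (Nat.unpair i).1 (Nat.unpair i).2 N,
      fun i N => isClosed_Gset hf _ _ _ a, statChar_eq_iInter hf hg a⟩
  · rw [statChar_eq_iInter hf hg a]
    exact MeasurableSet.iInter fun i => MeasurableSet.iUnion fun N =>
      (isClosed_Gset hf _ _ _ a).measurableSet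
  · intro x hx ε hε
    have hx' : Tendsto (fun n => ‖(a n) • x‖) atTop (nhds 0) := hx
    have hev : ∀ᶠ n in atTop, ‖(a n) • x‖ < ε := hx' (Iio_mem_nhds hε)
    obtain ⟨N, hN⟩ := eventually_atTop.1 hev
    apply zd_finite hf hg
    apply Set.Finite.subset (Set.finite_Iio N)
    intro n hn
    simp only [mem_setOf_eq] at hn
    simp only [Set.mem_Iio]
    by_contra hc
    push_neg at hc
    exact absurd hn (not_le.2 (hN n hc))
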